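/- For each i ∈ {1,...,m−1} let γ_i* := sup{‖S_i(θ)‖² : θ ∈ ℝ^d, ‖S₀(θ)‖² ≤ ‖S_i(θ)‖²} ∈ [0,∞], and let r be the q-th largest value among γ₁*, ..., γ_{m−1}*. Then the SPS confidence region satisfies Θ̂ₙ ⊆ {θ ∈ ℝ^d : (θ − θ̂ₙ)ᵀ Rₙ (θ − θ̂ₙ) ≤ r}. -/

import Mathlib

open Matrix

noncomputable section

private lemma sorted_getD_ge {l : List EReal} (hl : l.Pairwise (· ≤ ·)) {q : ℕ} (hq : 0 < q)
    (hqL : q ≤ l.length) {c : EReal}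
    (hcount : q ≤ l.countP (fun x => decide (c ≤ x))) :
    c ≤ l.getD (l.length - q) 0 := by
  set k := l.length - q with hk
  have hkL : k < l.length := by omega
  rw [List.getD_eq_getElem l 0 hkL]
  by_contra hlt
  push_neg at hlt
  have htake : ∀ x ∈ l.take (k+1), ¬ (decide (c ≤ x) = true) := by
    intro x hx
    rw [List.mem_iff_getElem] at hx
    obtain ⟨i, hi, hxi⟩ := hx
    have hlen : (l.take (k+1)).length = min (k+1) l.length := List.length_take
    have hik : i ≤ k := by omega
    have hiL : i < l.length := by omega
    have hx_eq : x = l[i] := by rw [← hxi]; exact List.getElem_take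
    have hle : l[i] ≤ l[k] := by
      rcases lt_or_eq_of_le hik with h | h
      · exact List.pairwise_iff_getElem.mp hl i k hiL hkL h
      · subst h; exact le_rfl
    simp only [decide_eq_true_eq]
    rw [hx_eq]
    exact not_le.mpr (lt_of_le_of_lt hle hlt)
  have hsplit : l.countP (fun x => decide (c ≤ x)) =
      (l.take (k+1)).countP (fun x => decide (c ≤ x)) +
      (l.drop (k+1)).countP (fun x => decide (c ≤ x)) := by
    conv_lhs => rw [← List.take_append_drop (k+1) l]
    rw [List.countP_append]
  have h1 : (l.take (k+1)).countP (fun x => decide (c ≤ x)) = 0 :=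
    List.countP_eq_zero.mpr htake
  have h2 : (l.drop (k+1)).countP (fun x => decide (c ≤ x)) ≤ l.length - (k+1) := by
    have := List.countP_le_length (p := fun x => decide (c ≤ x)) (l := l.drop (k+1))
    simpa [List.length_drop] using this
  omega

/-- Squared Euclidean norm of a vector in `ℝ^d`. -/
def spsNormSq {d : ℕ} (v : Fin d → ℝ) : ℝ := ∑ j, v j ^ 2

/-- The strict total order `≻_π`. -/
def SuccPi {m : ℕ} (σ : Equiv.Perm (Fin m)) (z : Fin m → ℝ) (k j : Fin m) : Prop :=
  z j < z k ∨ (z k = z j ∧ σ j < σ k)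

/-- The (sign-perturbed) sums `S_i(θ)`. -/
def spsS {d n m : ℕ} (φ : Fin n → Fin d → ℝ) (Rhalf : Matrix (Fin d) (Fin d) ℝ)
    (Y : Fin n → ℝ) (a : Fin m → Fin n → ℝ) (i : Fin m) (θ : Fin d → ℝ) : Fin d → ℝ :=
  Rhalf⁻¹ *ᵥ ((n : ℝ)⁻¹ • ∑ t, (a i t * (Y t - φ t ⬝ᵥ θ)) • φ t)

/-- The rank `𝓡(θ)`. -/
def spsRank {d n m : ℕ} [NeZero m] (φ : Fin n → Fin d → ℝ)
    (Rhalf : Matrix (Fin d) (Fin d) ℝ) (Y : Fin n → ℝ) (a : Fin m → Fin n → ℝ)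
    (σ : Equiv.Perm (Fin m)) (θ : Fin d → ℝ) : ℕ :=
  1 + Set.ncard {i : Fin m | i ≠ 0 ∧
      SuccPi σ (fun j => spsNormSq (spsS φ Rhalf Y a j θ)) 0 i}

/-- The SPS confidence region `Θ̂ₙ`. -/
def spsRegion {d n m : ℕ} [NeZero m] (φ : Fin n → Fin d → ℝ)
    (Rhalf : Matrix (Fin d) (Fin d) ℝ) (Y : Fin n → ℝ) (a : Fin m → Fin n → ℝ)
    (σ : Equiv.Perm (Fin m)) (q : ℕ) : Set (Fin d → ℝ) :=
  {θ | spsRank φ Rhalf Y a σ θ ≤ m - q}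

/-- `γ_i* = sup {‖S_i(θ)‖² : ‖S₀(θ)‖² ≤ ‖S_i(θ)‖²}`, in the extended reals. -/
def gammaStar {d n m : ℕ} [NeZero m] (φ : Fin n → Fin d → ℝ)
    (Rhalf : Matrix (Fin d) (Fin d) ℝ) (Y : Fin n → ℝ) (a : Fin m → Fin n → ℝ)
    (i : Fin m) : EReal :=
  sSup ((fun θ : Fin d → ℝ => ((spsNormSq (spsS φ Rhalf Y a i θ) : ℝ) : EReal)) ''
    {θ : Fin d → ℝ | spsNormSq (spsS φ Rhalf Y a 0 θ) ≤ spsNormSq (spsS φ Rhalf Y a i θ)})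

/-- The `q`-th largest element of a multiset of extended reals. -/
def qthLargestE (s : Multiset EReal) (q : ℕ) : EReal :=
  (s.sort (· ≤ ·)).getD (Multiset.card s - q) 0

private lemma le_qthLargestE {s : Multiset EReal} {q : ℕ} (hq : 0 < q)
    (hqs : q ≤ Multiset.card s) {c : EReal}
    (hcount : q ≤ Multiset.countP (fun x => c ≤ x) s) :
    c ≤ qthLargestE s q := by
  classical
  unfold qthLargestE
  have hsort := Multiset.pairwise_sort (α := EReal) (r := (· ≤ ·)) (s := s)
  have hlen : (s.sort (· ≤ ·)).length = Multiset.card s := Multiset.length_sort _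
  have hc : Multiset.countP (fun x => c ≤ x) s =
      (s.sort (· ≤ ·)).countP (fun x => decide (c ≤ x)) := by
    conv_lhs => rw [← Multiset.sort_eq (r := (· ≤ ·)) (s := s)]
    exact Multiset.coe_countP _ _
  rw [← hlen]
  exact sorted_getD_ge hsort hq (hlen ▸ hqs) (by rw [← hc]; exact hcount)

private lemma spsS_zero_normSq {d n m : ℕ} [NeZero m] (hn : 0 < n)
    (φ : Fin n → Fin d → ℝ) (Y : Fin n → ℝ)
    (Rn : Matrix (Fin d) (Fin d) ℝ)
    (hRn : Rn = (n : ℝ)⁻¹ • ∑ t, vecMulVec (φ t) (φ t))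
    (hPD : Rn.PosDef)
    (Rhalf : Matrix (Fin d) (Fin d) ℝ)
    (hRhalfInv : IsUnit Rhalf.det)
    (hfact : Rhalf * Rhalfᵀ = Rn)
    (θhat : Fin d → ℝ)
    (hθhat : θhat = (∑ t, vecMulVec (φ t) (φ t))⁻¹ *ᵥ ∑ t, Y t • φ t)
    (a : Fin m → Fin n → ℝ) (ha0 : ∀ t, a 0 t = 1) (θ : Fin d → ℝ) :
    spsNormSq (spsS φ Rhalf Y a (0 : Fin m) θ) = (θ - θhat) ⬝ᵥ (Rn *ᵥ (θ - θhat)) := by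
  set M : Matrix (Fin d) (Fin d) ℝ := ∑ t, vecMulVec (φ t) (φ t) with hM
  have hnR : (n : ℝ) ≠ 0 := Nat.cast_ne_zero.mpr hn.ne'
  have hMR : M = (n : ℝ) • Rn := by
    rw [hRn, smul_smul, mul_inv_cancel₀ hnR, one_smul]
  have hMdet : IsUnit M.det := by
    rw [hMR, Matrix.det_smul]
    exact (isUnit_iff_ne_zero).mpr (mul_ne_zero (pow_ne_zero _ hnR) hPD.det_pos.ne')
  have hMθhat : M *ᵥ θhat = ∑ t, Y t • φ t := by
    rw [hθhat, Matrix.mulVec_mulVec, Matrix.mul_nonsing_inv _ hMdet, Matrix.one_mulVec]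
  have hsum : ∀ v : Fin d → ℝ, M *ᵥ v = ∑ t, (φ t ⬝ᵥ v) • φ t := by
    intro v
    funext i
    simp only [hM, Matrix.mulVec, dotProduct, Matrix.sum_apply, vecMulVec_apply,
      Finset.sum_apply, Pi.smul_apply, smul_eq_mul, Finset.sum_mul]
    rw [Finset.sum_comm]
    exact Finset.sum_congr rfl fun t _ => Finset.sum_congr rfl fun x _ => by ring
  set w : Fin d → ℝ := θhat - θ with hw
  have hS0 : spsS φ Rhalf Y a (0 : Fin m) θ = Rhalfᵀ *ᵥ w := by
    unfold spsS
    simp only [ha0, one_mul]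
    have hv : ∑ t, (Y t - φ t ⬝ᵥ θ) • φ t = M *ᵥ w := by
      rw [hw, Matrix.mulVec_sub, hMθhat, hsum θ, ← Finset.sum_sub_distrib]
      congr 1; ext t
      rw [sub_smul]
    rw [hv, ← Matrix.smul_mulVec, ← hRn, Matrix.mulVec_mulVec]
    rw [← hfact, ← mul_assoc, Matrix.nonsing_inv_mul _ hRhalfInv, one_mul]
  have hdot : ∀ v : Fin d → ℝ, spsNormSq v = v ⬝ᵥ v := fun v => by
    simp [spsNormSq, dotProduct, sq]
  have hθw : θ - θhat = -w := by rw [hw, neg_sub]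
  rw [hS0, hdot, hθw, Matrix.mulVec_neg, dotProduct_neg, neg_dotProduct, neg_neg,
    dotProduct_mulVec, vecMul_transpose, Matrix.mulVec_mulVec, hfact, dotProduct_comm]

theorem sps_region_subset_ellipsoid
    (d n m q : ℕ) [NeZero m] (hn : 0 < n) (hq : 0 < q) (hqm : q < m)
    (φ : Fin n → Fin d → ℝ) (Y : Fin n → ℝ)
    (Rn : Matrix (Fin d) (Fin d) ℝ)
    (hRn : Rn = (n : ℝ)⁻¹ • ∑ t, vecMulVec (φ t) (φ t))
    (hPD : Rn.PosDef)
    (Rhalf : Matrix (Fin d) (Fin d) ℝ)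
    (hRhalfInv : IsUnit Rhalf.det)
    (hfact : Rhalf * Rhalfᵀ = Rn)
    (θhat : Fin d → ℝ)
    (hθhat : θhat = (∑ t, vecMulVec (φ t) (φ t))⁻¹ *ᵥ ∑ t, Y t • φ t)
    (a : Fin m → Fin n → ℝ)
    (ha0 : ∀ t, a 0 t = 1)
    (ha : ∀ i t, a i t = 1 ∨ a i t = -1)
    (π : Equiv.Perm (Fin m)) :
    spsRegion φ Rhalf Y a π q ⊆
      {θ : Fin d → ℝ | (((θ - θhat) ⬝ᵥ (Rn *ᵥ (θ - θhat)) : ℝ) : EReal) ≤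
        qthLargestE ((Finset.univ.filter (fun i : Fin m => i ≠ 0)).val.map
          (fun i => gammaStar φ Rhalf Y a i)) q} := by
  classical
  intro θ hθ
  simp only [spsRegion, Set.mem_setOf_eq, spsRank] at hθ
  set z : Fin m → ℝ := fun j => spsNormSq (spsS φ Rhalf Y a j θ) with hzdef
  have hz0 : z 0 = (θ - θhat) ⬝ᵥ (Rn *ᵥ (θ - θhat)) :=
    spsS_zero_normSq hn φ Y Rn hRn hPD Rhalf hRhalfInv hfact θhat hθhat a ha0 θ
  set F : Finset (Fin m) := Finset.univ.filter (fun i : Fin m => i ≠ 0) with hF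
  set B : Finset (Fin m) := F.filter (fun i => SuccPi π z 0 i) with hB
  set T : Finset (Fin m) := F.filter (fun i => ¬ SuccPi π z 0 i) with hT
  have hsetB : {i : Fin m | i ≠ 0 ∧ SuccPi π z 0 i} = ↑B := by
    ext i; simp [hB, hF, and_assoc]
  have hcardB : Set.ncard {i : Fin m | i ≠ 0 ∧ SuccPi π z 0 i} = B.card := by
    rw [hsetB, Set.ncard_coe_finset]
  rw [hcardB] at hθ
  have hFcard : F.card = m - 1 := by
    rw [hF, Finset.filter_ne', Finset.card_erase_of_mem (Finset.mem_univ _),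
      Finset.card_univ, Fintype.card_fin]
  have hBT : B.card + T.card = F.card :=
    Finset.card_filter_add_card_filter_not _
  have hTq : q ≤ T.card := by omega
  have hγ : ∀ i ∈ T, ((z 0 : ℝ) : EReal) ≤ gammaStar φ Rhalf Y a i := by
    intro i hi
    rw [hT, Finset.mem_filter] at hi
    have h0i : z 0 ≤ z i := by
      have := hi.2
      unfold SuccPi at this
      push_neg at this
      exact this.1
    calc ((z 0 : ℝ) : EReal) ≤ ((z i : ℝ) : EReal) := by exact_mod_cast h0i
      _ ≤ gammaStar φ Rhalf Y a i := le_sSup ⟨θ, h0i, rfl⟩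
  have hcount : q ≤ Multiset.countP (fun x => ((z 0 : ℝ) : EReal) ≤ x)
      (F.val.map (fun i => gammaStar φ Rhalf Y a i)) := by
    rw [Multiset.countP_map]
    have hsub : T ⊆ F.filter (fun i => ((z 0 : ℝ) : EReal) ≤ gammaStar φ Rhalf Y a i) := by
      intro i hi
      rw [Finset.mem_filter]
      exact ⟨(Finset.mem_filter.mp hi).1, hγ i hi⟩
    calc q ≤ T.card := hTq
      _ ≤ (F.filter (fun i => ((z 0 : ℝ) : EReal) ≤ gammaStar φ Rhalf Y a i)).card :=
          Finset.card_le_card hsub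
      _ = Multiset.card (Multiset.filter
          (fun i => ((z 0 : ℝ) : EReal) ≤ gammaStar φ Rhalf Y a i) F.val) := rfl
  have hcards : q ≤ Multiset.card (F.val.map (fun i => gammaStar φ Rhalf Y a i)) := by
    rw [Multiset.card_map]
    show q ≤ F.card
    omega
  show (((θ - θhat) ⬝ᵥ (Rn *ᵥ (θ - θhat)) : ℝ) : EReal) ≤ _
  rw [← hz0]
  exact le_qthLargestE hq hcards hcount

end
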